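/- For β > 0 and s ≥ s' > 0, the function t ↦ (exp(βst) - exp(-βst)) / (exp(βs't) - exp(-βs't)) is monotone nondecreasing on (0, ∞). -/

import Mathlib

open Real

/-- `sinh x ≤ x * cosh x` for `0 ≤ x`. -/
lemma aux_sinh_le (x : ℝ) (hx : 0 ≤ x) : Real.sinh x ≤ x * Real.cosh x := by
  have hmono : Monotone (fun x : ℝ => x * Real.cosh x - Real.sinh x) := by
    apply monotone_of_deriv_nonneg
    · exact (differentiable_id.mul Real.differentiable_cosh).sub Real.differentiable_sinh
    · intro x
      have h : HasDerivAt (fun x : ℝ => x * Real.cosh x - Real.sinh x) (x * Real.sinh x) x := by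
        have h1 := (hasDerivAt_id x).mul (Real.hasDerivAt_cosh x)
        have h2 := (h1.sub (Real.hasDerivAt_sinh x))
        exact h2.congr_deriv (by simp)
      rw [h.deriv]
      rcases le_or_gt 0 x with h | h
      · exact mul_nonneg h (by simpa using Real.sinh_le_sinh.2 h)
      · have h1 : Real.sinh x ≤ 0 := by simpa using Real.sinh_le_sinh.2 h.le
        nlinarith
  have := hmono hx
  simpa using this

/-- `sinh x / x` is monotone on `(0, ∞)`. -/
lemma aux_sinh_div_mono : MonotoneOn (fun x : ℝ => Real.sinh x / x) (Set.Ioi 0) := by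
  have hint : interior (Set.Ioi (0:ℝ)) = Set.Ioi 0 := interior_Ioi
  have hd : ∀ x ∈ Set.Ioi (0:ℝ), HasDerivAt (fun x : ℝ => Real.sinh x / x)
      ((Real.cosh x * x - Real.sinh x * 1) / x ^ 2) x := by
    intro x hx
    exact (Real.hasDerivAt_sinh x).div (hasDerivAt_id x) (ne_of_gt hx)
  apply monotoneOn_of_deriv_nonneg (convex_Ioi 0)
  · exact Real.continuous_sinh.continuousOn.div continuousOn_id
      (fun x hx => ne_of_gt hx)
  · rw [hint]; exact fun x hx => (hd x hx).differentiableAt.differentiableWithinAt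
  · rw [hint]; intro x hx
    rw [(hd x hx).deriv]
    apply div_nonneg _ (sq_nonneg x)
    have := aux_sinh_le x (le_of_lt hx)
    linarith
/-- key: `0 ≤ x ≤ y → y * sinh x ≤ x * sinh y`. -/
lemma aux_key {x y : ℝ} (hx : 0 ≤ x) (hxy : x ≤ y) : y * Real.sinh x ≤ x * Real.sinh y := by
  rcases eq_or_lt_of_le hx with h | h
  · simp [← h]
  · have hy : 0 < y := lt_of_lt_of_le h hxy
    have := aux_sinh_div_mono (Set.mem_Ioi.2 h) (Set.mem_Ioi.2 hy) hxy
    rw [div_le_div_iff₀ h hy] at this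
    linarith

theorem stmt_1 (β s s' : ℝ) (hβ : 0 < β) (hs' : 0 < s') (hss : s' ≤ s) :
    MonotoneOn (fun t : ℝ =>
      (Real.exp (β * s * t) - Real.exp (-(β * s * t))) /
      (Real.exp (β * s' * t) - Real.exp (-(β * s' * t)))) (Set.Ioi 0) := by
  have hfeq : (fun t : ℝ =>
      (Real.exp (β * s * t) - Real.exp (-(β * s * t))) /
      (Real.exp (β * s' * t) - Real.exp (-(β * s' * t)))) =
      fun t : ℝ => Real.sinh (β * s * t) / Real.sinh (β * s' * t) := by
    funext t
    rw [Real.sinh_eq, Real.sinh_eq, div_div_div_comm]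
    norm_num
  rw [hfeq]
  set a := β * s with ha
  set b := β * s' with hb
  have hb0 : 0 < b := mul_pos hβ hs'
  have hab : b ≤ a := by
    apply mul_le_mul_of_nonneg_left hss hβ.le
  have ha0 : 0 < a := lt_of_lt_of_le hb0 hab
  have hDne : ∀ t ∈ Set.Ioi (0:ℝ), Real.sinh (b * t) ≠ 0 := by
    intro t ht
    exact ne_of_gt (by rw [Real.sinh_pos_iff]; exact mul_pos hb0 ht)
  have hd : ∀ t ∈ Set.Ioi (0:ℝ), HasDerivAt (fun t : ℝ => Real.sinh (a * t) / Real.sinh (b * t))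
      ((Real.cosh (a * t) * a * Real.sinh (b * t) -
        Real.sinh (a * t) * (Real.cosh (b * t) * b)) / (Real.sinh (b * t)) ^ 2) t := by
    intro t ht
    have hN : HasDerivAt (fun t : ℝ => Real.sinh (a * t)) (Real.cosh (a * t) * a) t :=
      (Real.hasDerivAt_sinh (a * t)).comp t (by simpa using (hasDerivAt_id t).const_mul a)
    have hD : HasDerivAt (fun t : ℝ => Real.sinh (b * t)) (Real.cosh (b * t) * b) t :=
      (Real.hasDerivAt_sinh (b * t)).comp t (by simpa using (hasDerivAt_id t).const_mul b)
    exact hN.div hD (hDne t ht)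
  apply monotoneOn_of_deriv_nonneg (convex_Ioi 0)
  · apply ContinuousOn.div
    · exact (Real.continuous_sinh.comp (continuous_const.mul continuous_id)).continuousOn
    · exact (Real.continuous_sinh.comp (continuous_const.mul continuous_id)).continuousOn
    · exact hDne
  · rw [interior_Ioi]
    exact fun t ht => (hd t ht).differentiableAt.differentiableWithinAt
  · rw [interior_Ioi]
    intro t ht
    rw [(hd t ht).deriv]
    apply div_nonneg _ (sq_nonneg _)
    -- key inequality
    have ht0 : (0:ℝ) < t := ht
    have hkey := aux_key (x := (a - b) * t) (y := (a + b) * t)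
      (mul_nonneg (by linarith) ht0.le) (by nlinarith)
    -- product-to-sum
    have e1 : Real.sinh ((a + b) * t) =
        Real.sinh (a * t) * Real.cosh (b * t) + Real.cosh (a * t) * Real.sinh (b * t) := by
      rw [show (a + b) * t = a * t + b * t by ring, Real.sinh_add]
    have e2 : Real.sinh ((a - b) * t) =
        Real.sinh (a * t) * Real.cosh (b * t) - Real.cosh (a * t) * Real.sinh (b * t) := by
      rw [show (a - b) * t = a * t - b * t by ring, Real.sinh_sub]
    rw [e1, e2] at hkey
    nlinarith [hkey, ht0]
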